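/- The set S = {t ∈ [0,1) : tT has a unique fixed point x_t ∈ Int(G)} is closed in [0,1): if t₀ ∈ [0,1) is a limit of points of S, then t₀ ∈ S. -/

import Mathlib

/-- The set `S = {t ∈ [0,1) : tT has a unique fixed point in Int G}` is
closed in `[0,1)`. -/
theorem stmt_12 {Y : Type*} [NormedAddCommGroup Y] [NormedSpace ℝ Y] [CompleteSpace Y]
    (G : Set Y) (hGne : G.Nonempty) (h0 : (0:Y) ∈ interior G)
    (T : Y → Y)
    (hT : ∀ x ∈ closure G, ∀ y ∈ closure G, ‖T x - T y‖ ≤ ‖x - y‖)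
    (hLS : ∀ x ∈ frontier G, ∀ l : ℝ, 1 < l → T x ≠ l • x) :
    ∀ t₀ ∈ Set.Ico (0:ℝ) 1,
      t₀ ∈ closure {t : ℝ | t ∈ Set.Ico (0:ℝ) 1 ∧
        ∃! x : Y, x ∈ interior G ∧ t • T x = x} →
      ∃! x : Y, x ∈ interior G ∧ t₀ • T x = x := by
  intro t₀ ht₀ hcl
  have h0cl : (0:Y) ∈ closure G := subset_closure (interior_subset h0)
  -- uniqueness of fixed points of t₀ • T on closure G
  have huniq : ∀ x ∈ closure G, ∀ y ∈ closure G, t₀ • T x = x → t₀ • T y = y → x = y := by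
    intro x hx y hy hfx hfy
    by_contra hne
    have hpos : 0 < ‖x - y‖ := by
      rw [norm_pos_iff]; exact sub_ne_zero_of_ne hne
    have h1 : ‖x - y‖ ≤ t₀ * ‖x - y‖ := by
      calc ‖x - y‖ = ‖t₀ • T x - t₀ • T y‖ := by rw [hfx, hfy]
        _ = |t₀| * ‖T x - T y‖ := by rw [← smul_sub, norm_smul, Real.norm_eq_abs]
        _ = t₀ * ‖T x - T y‖ := by rw [abs_of_nonneg ht₀.1]
        _ ≤ t₀ * ‖x - y‖ := mul_le_mul_of_nonneg_left (hT x hx y hy) ht₀.1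
    nlinarith [ht₀.2]
  rcases eq_or_lt_of_le ht₀.1 with h0t | h0t
  · -- case t₀ = 0 : the unique fixed point is 0
    refine ⟨0, ⟨h0, by simp [← h0t]⟩, ?_⟩
    rintro y ⟨hy, hfy⟩
    exact huniq y (subset_closure (interior_subset hy)) 0 h0cl hfy (by simp [← h0t])
  · -- case 0 < t₀
    obtain ⟨u, hu, hulim⟩ := mem_closure_iff_seq_limit.mp hcl
    set c : ℝ := (1 + t₀) / 2 with hc
    have hc1 : c < 1 := by rw [hc]; linarith [ht₀.2]
    have hc0 : 0 < c := by rw [hc]; linarith [ht₀.1]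
    have ht₀c : t₀ < c := by rw [hc]; linarith [ht₀.2]
    obtain ⟨N, hN⟩ := Filter.eventually_atTop.mp (hulim.eventually (gt_mem_nhds ht₀c))
    set v : ℕ → ℝ := fun n => u (n + N) with hvdef
    have hvS : ∀ n, v n ∈ {t : ℝ | t ∈ Set.Ico (0:ℝ) 1 ∧
        ∃! x : Y, x ∈ interior G ∧ t • T x = x} := fun n => hu (n + N)
    have hvc : ∀ n, v n < c := fun n => hN (n + N) (Nat.le_add_left N n)
    have hvlim : Filter.Tendsto v Filter.atTop (nhds t₀) :=
      hulim.comp (Filter.tendsto_add_atTop_nat N)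
    have hv0 : ∀ n, 0 ≤ v n := fun n => (hvS n).1.1
    choose x hxG hxfix using fun n => ((hvS n).2).exists
    have hxcl : ∀ n, x n ∈ closure G := fun n => subset_closure (interior_subset (hxG n))
    set M : ℝ := c * ‖T 0‖ / (1 - c) + ‖T 0‖ with hM
    have hM0 : 0 ≤ M := by
      have : (0:ℝ) ≤ c * ‖T 0‖ / (1 - c) :=
        div_nonneg (by positivity) (by linarith)
      have := norm_nonneg (T 0)
      rw [hM]; linarith
    have hTb : ∀ n, ‖T (x n)‖ ≤ M := by
      intro n
      have h1 : ‖T (x n) - T 0‖ ≤ ‖x n - 0‖ := hT _ (hxcl n) 0 h0cl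
      rw [sub_zero] at h1
      have h2 : ‖T (x n)‖ ≤ ‖x n‖ + ‖T 0‖ := by
        have h3 := norm_sub_norm_le (T (x n)) (T 0)
        linarith
      have h4 : ‖x n‖ = v n * ‖T (x n)‖ := by
        have := congrArg norm (hxfix n).symm
        rwa [norm_smul, Real.norm_eq_abs, abs_of_nonneg (hv0 n)] at this
      have h5 : ‖x n‖ ≤ c * ‖T 0‖ / (1 - c) := by
        rw [le_div_iff₀ (by linarith : (0:ℝ) < 1 - c)]
        nlinarith [hvc n, hv0 n, norm_nonneg (x n), norm_nonneg (T 0), norm_nonneg (T (x n))]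
      rw [hM]; linarith
    have key : ∀ n m, (1 - c) * ‖x n - x m‖ ≤ M * |v n - v m| := by
      intro n m
      have e : x n - x m = v n • (T (x n) - T (x m)) + (v n - v m) • T (x m) := by
        rw [smul_sub, sub_smul, hxfix n, hxfix m]; abel
      have hineq : ‖x n - x m‖ ≤ c * ‖x n - x m‖ + |v n - v m| * M := by
        calc ‖x n - x m‖
            = ‖v n • (T (x n) - T (x m)) + (v n - v m) • T (x m)‖ := by rw [← e]
          _ ≤ ‖v n • (T (x n) - T (x m))‖ + ‖(v n - v m) • T (x m)‖ := norm_add_le _ _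
          _ = v n * ‖T (x n) - T (x m)‖ + |v n - v m| * ‖T (x m)‖ := by
              rw [norm_smul, norm_smul, Real.norm_eq_abs, Real.norm_eq_abs,
                abs_of_nonneg (hv0 n)]
          _ ≤ c * ‖x n - x m‖ + |v n - v m| * M := by
              have h1 : v n * ‖T (x n) - T (x m)‖ ≤ c * ‖x n - x m‖ :=
                mul_le_mul (hvc n).le (hT _ (hxcl n) _ (hxcl m)) (norm_nonneg _) hc0.le
              have h2 : |v n - v m| * ‖T (x m)‖ ≤ |v n - v m| * M :=
                mul_le_mul_of_nonneg_left (hTb m) (abs_nonneg _)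
              linarith
      linarith
    have hcauchy : CauchySeq x := by
      rw [Metric.cauchySeq_iff]
      intro ε hε
      have hvC := hvlim.cauchySeq
      rw [Metric.cauchySeq_iff] at hvC
      obtain ⟨N', hN'⟩ := hvC ((1 - c) * ε / (M + 1))
        (div_pos (mul_pos (by linarith) hε) (by linarith))
      refine ⟨N', fun m hm n hn => ?_⟩
      have hk := key m n
      have hd := hN' m hm n hn
      rw [Real.dist_eq] at hd
      rw [dist_eq_norm]
      have hmul : M * |v m - v n| ≤ M * ((1 - c) * ε / (M + 1)) :=
        mul_le_mul_of_nonneg_left hd.le hM0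
      have hdiv : M * ((1 - c) * ε / (M + 1)) < (1 - c) * ε := by
        rw [mul_div_assoc']
        rw [div_lt_iff₀ (by linarith : (0:ℝ) < M + 1)]
        nlinarith
      have h5 : (1 - c) * ‖x m - x n‖ < (1 - c) * ε := lt_of_le_of_lt (hk.trans hmul) hdiv
      exact lt_of_mul_lt_mul_left h5 (by linarith)
    obtain ⟨xl, hxl⟩ := cauchySeq_tendsto_of_complete hcauchy
    have hxlcl : xl ∈ closure G :=
      isClosed_closure.mem_of_tendsto hxl (Filter.Eventually.of_forall hxcl)
    have hTlim : Filter.Tendsto (fun n => T (x n)) Filter.atTop (nhds (T xl)) := by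
      have h1 : ∀ n, dist (T (x n)) (T xl) ≤ dist (x n) xl := fun n => by
        rw [dist_eq_norm, dist_eq_norm]; exact hT _ (hxcl n) _ hxlcl
      exact tendsto_iff_dist_tendsto_zero.mpr
        (squeeze_zero (fun n => dist_nonneg) h1
          (tendsto_iff_dist_tendsto_zero.mp hxl))
    have hfix : t₀ • T xl = xl := by
      have h2 : Filter.Tendsto (fun n => v n • T (x n)) Filter.atTop (nhds (t₀ • T xl)) :=
        hvlim.smul hTlim
      have h3 : (fun n => v n • T (x n)) = x := funext hxfix
      rw [h3] at h2
      exact tendsto_nhds_unique h2 hxl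
    have hxlint : xl ∈ interior G := by
      by_contra hni
      have hfr : xl ∈ frontier G := ⟨hxlcl, hni⟩
      have hT1 : T xl = t₀⁻¹ • xl := by
        conv_rhs => rw [← hfix]
        rw [inv_smul_smul₀ (ne_of_gt h0t)]
      exact hLS xl hfr t₀⁻¹ ((one_lt_inv₀ h0t).mpr ht₀.2) hT1
    exact ⟨xl, ⟨hxlint, hfix⟩, fun y hy =>
      huniq y (subset_closure (interior_subset hy.1)) xl hxlcl hy.2 hfix⟩
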